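/- Let K be a field and let S_1, S_2, C_1, C_2 ∈ K satisfy C_1 = (S_1 − 1)(C_2 + 1) and C_2 = (S_2 − 1)(C_1 + 1), with S_1 ≠ 0, S_2 ≠ 0, S_1 + S_2 − S_1 S_2 ≠ 0, and S := 1 + C_1 + C_2 ≠ 0. Then S = S_1 S_2 / (S_1 + S_2 − S_1 S_2), and consequently 1 − 1/S = (1 − 1/S_1) + (1 − 1/S_2). -/
import Mathlib


/-- Solving the free-product system: if `C₁ = (S₁-1)(C₂+1)` and `C₂ = (S₂-1)(C₁+1)`,
then `S = 1 + C₁ + C₂ = S₁S₂/(S₁+S₂-S₁S₂)` and `1 - 1/S = (1 - 1/S₁) + (1 - 1/S₂)`. -/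
theorem stmt_6 {K : Type*} [Field K] (S₁ S₂ C₁ C₂ : K)
    (h₁ : C₁ = (S₁ - 1) * (C₂ + 1)) (h₂ : C₂ = (S₂ - 1) * (C₁ + 1))
    (hS₁ : S₁ ≠ 0) (hS₂ : S₂ ≠ 0) (hden : S₁ + S₂ - S₁ * S₂ ≠ 0)
    (hS : 1 + C₁ + C₂ ≠ 0) :
    1 + C₁ + C₂ = S₁ * S₂ / (S₁ + S₂ - S₁ * S₂) ∧
    1 - 1 / (1 + C₁ + C₂) = (1 - 1 / S₁) + (1 - 1 / S₂) := by
  have hC1 : C₁ * (S₁ + S₂ - S₁ * S₂) = (S₁ - 1) * S₂ := by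
    linear_combination h₁ + (S₁ - 1) * h₂
  have hC2 : C₂ * (S₁ + S₂ - S₁ * S₂) = (S₂ - 1) * S₁ := by
    linear_combination h₂ + (S₂ - 1) * h₁
  have key : (1 + C₁ + C₂) * (S₁ + S₂ - S₁ * S₂) = S₁ * S₂ := by
    linear_combination hC1 + hC2
  have hleft : 1 + C₁ + C₂ = S₁ * S₂ / (S₁ + S₂ - S₁ * S₂) := by
    rw [eq_div_iff hden]; linear_combination key
  refine ⟨hleft, ?_⟩
  rw [hleft]
  rw [one_div_div]
  field_simp
  ring
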